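/- arXiv:2302.04033 — 2 statements merged into one kernel-verified Lean document; each statement's English description precedes it below -/
import Mathlib

section
/- Fix t ≥ 2 and a vertex v in a connected component of size at least t, with all vertices assigned i.i.d. uniform ranks in [0,1]. In a BFS from v that explores vertices and stops when a vertex of rank lower than rank(v) is found (or t vertices are explored), the probability that exactly k ≤ t vertices are explored is 1/(k(k−1)) for 2 ≤ k < t; consequently the expected number of explored vertices is ∑_{k=2}^{t} k/(k(k−1)) = O(log t). -/
open MeasureTheory ProbabilityTheory

open intervalIntegral Set

lemma integral_helper (n : ℕ) :
    ∫ a in (0:ℝ)..1, a * (1-a)^n = 1/((n+2)*(n+1)) := by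
  have h : ∫ a in (0:ℝ)..1, a * (1-a)^n = ∫ a in (0:ℝ)..1, ((1-a)*a^n) := by
    have := intervalIntegral.integral_comp_sub_left (a := (0:ℝ)) (b := 1)
      (fun x => (1-x) * x^n) 1
    simp only [sub_zero, sub_self] at this
    rw [← this]
    congr 1
    ext a
    ring_nf
  rw [h]
  have : ∀ a : ℝ, (1-a)*a^n = a^n - a^(n+1) := by intro a; ring
  simp_rw [this]
  rw [intervalIntegral.integral_sub (intervalIntegral.intervalIntegrable_pow n)
    (intervalIntegral.intervalIntegrable_pow (n+1)), integral_pow, integral_pow]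
  push_cast
  field_simp
  ring

open MeasureTheory Set

noncomputable def unif : Measure ℝ := volume.restrict (Set.Icc (0:ℝ) 1)

instance : IsProbabilityMeasure unif := by
  constructor
  simp [unif, Real.volume_Icc]

lemma unif_Ioi {a : ℝ} (h0 : 0 ≤ a) : unif (Set.Ioi a) = ENNReal.ofReal (1-a) := by
  rw [unif, Measure.restrict_apply measurableSet_Ioi]
  rw [show Set.Ioi a ∩ Set.Icc 0 1 = Set.Ioc a 1 by
    ext x; simp only [mem_inter_iff, mem_Ioi, mem_Icc, mem_Ioc]
    constructor
    · rintro ⟨h1, _, h3⟩; exact ⟨h1, h3⟩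
    · rintro ⟨h1, h2⟩; exact ⟨h1, le_trans h0 h1.le, h2⟩]
  rw [Real.volume_Ioc]

lemma unif_Iio {a : ℝ} (h1 : a ≤ 1) : unif (Set.Iio a) = ENNReal.ofReal a := by
  rw [unif, Measure.restrict_apply measurableSet_Iio]
  rw [show Set.Iio a ∩ Set.Icc 0 1 = Set.Ico 0 a by
    ext x; simp only [mem_inter_iff, mem_Iio, mem_Icc, mem_Ico]
    constructor
    · rintro ⟨h2, h3, _⟩; exact ⟨h3, h2⟩
    · rintro ⟨h2, h3⟩; exact ⟨h3, h2, le_trans h3.le h1⟩]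
  rw [Real.volume_Ico, sub_zero]

lemma measurableSet_T (n : ℕ) :
    MeasurableSet {p : ℝ × (Fin (n+1) → ℝ) |
      (∀ j : Fin (n+1), (j:ℕ) < n → p.1 < p.2 j) ∧ p.2 (Fin.last n) < p.1} := by
  apply MeasurableSet.inter
  · show MeasurableSet {p : ℝ × (Fin (n+1) → ℝ) | ∀ j : Fin (n+1), (j:ℕ) < n → p.1 < p.2 j}
    rw [show {p : ℝ × (Fin (n+1) → ℝ) | ∀ j : Fin (n+1), (j:ℕ) < n → p.1 < p.2 j}
        = ⋂ j : Fin (n+1), {p | (j:ℕ) < n → p.1 < p.2 j} by ext p; simp]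
    apply MeasurableSet.iInter
    intro j
    by_cases hj : (j:ℕ) < n
    · simp only [hj, forall_true_left]
      exact measurableSet_lt measurable_fst ((measurable_pi_apply j).comp measurable_snd)
    · simp only [hj, false_implies]
      simp
  · exact measurableSet_lt ((measurable_pi_apply _).comp measurable_snd) measurable_fst

lemma pi_vol (n : ℕ) :
    Measure.pi (fun _ : Fin (n+2) => unif)
      {x | (∀ i : Fin (n+2), 1 ≤ (i:ℕ) → (i:ℕ) ≤ n → x 0 < x i) ∧ x (Fin.last (n+1)) < x 0}
      = ENNReal.ofReal (1/((n+2)*(n+1))) := by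
  have key := measurePreserving_piFinSuccAbove (fun _ : Fin (n+2) => unif) 0
  set T : Set (ℝ × (Fin (n+1) → ℝ)) := {p |
      (∀ j : Fin (n+1), (j:ℕ) < n → p.1 < p.2 j) ∧ p.2 (Fin.last n) < p.1} with hT
  have hSeq : {x : Fin (n+2) → ℝ | (∀ i : Fin (n+2), 1 ≤ (i:ℕ) → (i:ℕ) ≤ n → x 0 < x i)
      ∧ x (Fin.last (n+1)) < x 0}
      = (MeasurableEquiv.piFinSuccAbove (fun _ => ℝ) 0) ⁻¹' T := by
    ext x
    simp only [hT, Set.mem_preimage, Set.mem_setOf_eq, MeasurableEquiv.piFinSuccAbove,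
      MeasurableEquiv.coe_mk, Fin.removeNth,
      Fin.insertNthEquiv_zero, Fin.consEquiv_symm_apply, Fin.tail]
    constructor
    · rintro ⟨h1, h2⟩
      refine ⟨fun j hj => h1 j.succ (by simp) (by simp only [Fin.val_succ]; omega), ?_⟩
      convert h2 using 2
      simp
    · rintro ⟨h1, h2⟩
      constructor
      · intro i hi1 hin
        induction i using Fin.cases with
        | zero => simp at hi1
        | succ j =>
          apply h1 j
          simp only [Fin.val_succ] at hin
          omega
      · convert h2 using 2
        simp
  rw [hSeq, key.measure_preimage (measurableSet_T n).nullMeasurableSet]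
  rw [Measure.prod_apply (measurableSet_T n)]
  have hsec : ∀ a : ℝ, Prod.mk a ⁻¹' T
      = Set.pi Set.univ (fun j : Fin (n+1) => if (j:ℕ) < n then Set.Ioi a else Set.Iio a) := by
    intro a
    ext y
    simp only [hT, Set.mem_preimage, Set.mem_setOf_eq, Set.mem_pi, Set.mem_univ,
      forall_true_left]
    constructor
    · rintro ⟨h1, h2⟩ j
      by_cases hj : (j:ℕ) < n
      · simpa [hj] using h1 j hj
      · have hj' : j = Fin.last n := by
          have := j.isLt
          ext
          simp only [Fin.val_last]
          omega
        simpa [hj, hj'] using h2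
    · intro h
      constructor
      · intro j hj
        simpa [hj] using h j
      · have := h (Fin.last n)
        simpa using this
  rw [← hT]
  simp_rw [hsec, Measure.pi_pi]
  have hprod : ∀ a : ℝ, (∏ j : Fin (n+1), unif (if (j:ℕ) < n then Set.Ioi a else Set.Iio a))
      = unif (Set.Ioi a)^n * unif (Set.Iio a) := by
    intro a
    rw [Fin.prod_univ_eq_prod_range (fun m => unif (if m < n then Set.Ioi a else Set.Iio a))
      (n+1)]
    rw [Finset.prod_range_succ, if_neg (lt_irrefl n)]
    congr 1
    rw [Finset.prod_congr rfl (fun m hm => by rw [if_pos (Finset.mem_range.mp hm)]),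
      Finset.prod_const, Finset.card_range]
  simp_rw [hprod]
  show ∫⁻ a in Set.Icc (0:ℝ) 1, unif (Set.Ioi a)^n * unif (Set.Iio a) = _
  rw [setLIntegral_congr_fun measurableSet_Icc (
    (fun a (ha : a ∈ Set.Icc (0:ℝ) 1) => by
      rw [unif_Ioi ha.1, unif_Iio ha.2, ← ENNReal.ofReal_pow (by linarith [ha.2]),
        ← ENNReal.ofReal_mul (pow_nonneg (by linarith [ha.2]) n)]))]
  have hcont : Continuous (fun a : ℝ => (1-a)^n * a) := by fun_prop
  rw [← ofReal_integral_eq_lintegral_ofReal hcont.integrableOn_Icc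
    ((ae_restrict_iff' measurableSet_Icc).2 (ae_of_all _
      (fun a (ha : a ∈ Set.Icc (0:ℝ) 1) => by
        have h1 : (0:ℝ) ≤ 1 - a := by linarith [ha.2]
        have h2 := ha.1
        positivity)))]
  congr 1
  rw [MeasureTheory.integral_Icc_eq_integral_Ioc,
    ← intervalIntegral.integral_of_le (by norm_num : (0:ℝ) ≤ 1)]
  have hc : ∀ a : ℝ, (1-a)^n * a = a * (1-a)^n := fun a => mul_comm _ _
  simp_rw [hc]
  rw [integral_helper]

lemma measurableSet_S (n : ℕ) :
    MeasurableSet {x : Fin (n+2) → ℝ |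
      (∀ i : Fin (n+2), 1 ≤ (i:ℕ) → (i:ℕ) ≤ n → x 0 < x i) ∧ x (Fin.last (n+1)) < x 0} := by
  apply MeasurableSet.inter
  · show MeasurableSet {x : Fin (n+2) → ℝ | ∀ i : Fin (n+2), 1 ≤ (i:ℕ) → (i:ℕ) ≤ n → x 0 < x i}
    have : {x : Fin (n+2) → ℝ | ∀ i : Fin (n+2), 1 ≤ (i:ℕ) → (i:ℕ) ≤ n → x 0 < x i}
        = ⋂ i : Fin (n+2), {x | 1 ≤ (i:ℕ) → (i:ℕ) ≤ n → x 0 < x i} := by ext x; simp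
    rw [this]
    apply MeasurableSet.iInter
    intro i
    by_cases hi : 1 ≤ (i:ℕ) ∧ (i:ℕ) ≤ n
    · simp only [hi.1, hi.2, forall_true_left]
      exact measurableSet_lt (measurable_pi_apply 0) (measurable_pi_apply i)
    · have : {x : Fin (n+2) → ℝ | 1 ≤ (i:ℕ) → (i:ℕ) ≤ n → x 0 < x i} = Set.univ := by
        ext x
        simp only [Set.mem_setOf_eq, Set.mem_univ, iff_true]
        intro h1 h2
        exact absurd ⟨h1, h2⟩ hi
      rw [this]
      exact MeasurableSet.univ
  · show MeasurableSet {x : Fin (n+2) → ℝ | x (Fin.last (n+1)) < x 0}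
    exact measurableSet_lt (measurable_pi_apply _) (measurable_pi_apply _)

lemma map_pi {Ω : Type*} [MeasurableSpace Ω] (P : Measure Ω) [IsProbabilityMeasure P]
    (r : ℕ → Ω → ℝ) (hmeas : ∀ i, Measurable (r i))
    (hind : ProbabilityTheory.iIndepFun r P)
    (hunif : ∀ i, Measure.map (r i) P = unif) (k : ℕ) :
    Measure.map (fun ω (i : Fin k) => r i ω) P = Measure.pi (fun _ => unif) := by
  refine (Measure.pi_eq ?_).symm
  intro s hs
  classical
  set s' : ℕ → Set ℝ := fun m => if h : m < k then s ⟨m, h⟩ else Set.univ with hs'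
  have hs'meas : ∀ m, MeasurableSet (s' m) := by
    intro m
    by_cases h : m < k
    · simpa [hs', h] using hs ⟨m, h⟩
    · simp [hs', h]
  rw [Measure.map_apply (measurable_pi_lambda (fun ω (i : Fin k) => r i ω) fun i => hmeas i) (MeasurableSet.univ_pi hs)]
  have hpre : (fun ω (i : Fin k) => r i ω) ⁻¹' (Set.pi Set.univ s)
      = ⋂ m ∈ Finset.range k, r m ⁻¹' (s' m) := by
    ext ω
    simp only [Set.mem_preimage, Set.mem_pi, Set.mem_univ, forall_true_left,
      Set.mem_iInter, Finset.mem_range]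
    constructor
    · intro h m hm
      simpa [hs', hm] using h ⟨m, hm⟩
    · intro h i
      simpa [hs', i.isLt] using h i i.isLt
  rw [hpre, hind.measure_inter_preimage_eq_mul _ (fun m _ => hs'meas m)]
  have : ∀ m, P (r m ⁻¹' s' m) = unif (s' m) := by
    intro m
    rw [← Measure.map_apply (hmeas m) (hs'meas m), hunif m]
  simp_rw [this]
  rw [← Fin.prod_univ_eq_prod_range (fun m => unif (s' m)) k]
  exact Finset.prod_congr rfl (fun i _ => by simp [hs', i.isLt])

lemma prob_eq {Ω : Type*} [MeasurableSpace Ω] (P : Measure Ω) [IsProbabilityMeasure P]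
    (r : ℕ → Ω → ℝ) (hmeas : ∀ i, Measurable (r i))
    (hind : ProbabilityTheory.iIndepFun r P)
    (hunif : ∀ i, Measure.map (r i) P = unif) (k : ℕ) (hk : 2 ≤ k) :
    P {ω | (∀ i : ℕ, 1 ≤ i → i ≤ k - 2 → r 0 ω < r i ω) ∧ r (k-1) ω < r 0 ω}
      = ENNReal.ofReal (1 / ((k : ℝ) * ((k : ℝ) - 1))) := by
  obtain ⟨n, rfl⟩ : ∃ n, k = n + 2 := ⟨k - 2, by omega⟩
  have hset : {ω | (∀ i : ℕ, 1 ≤ i → i ≤ (n+2) - 2 → r 0 ω < r i ω) ∧ r ((n+2)-1) ω < r 0 ω}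
      = (fun ω (i : Fin (n+2)) => r i ω) ⁻¹' {x : Fin (n+2) → ℝ |
        (∀ i : Fin (n+2), 1 ≤ (i:ℕ) → (i:ℕ) ≤ n → x 0 < x i) ∧ x (Fin.last (n+1)) < x 0} := by
    ext ω
    simp only [Set.mem_setOf_eq, Set.mem_preimage]
    constructor
    · rintro ⟨h1, h2⟩
      refine ⟨fun i hi1 hin => ?_, ?_⟩
      · simpa using h1 (i:ℕ) hi1 (by omega)
      · simpa using h2
    · rintro ⟨h1, h2⟩
      refine ⟨fun i hi1 hin => ?_, ?_⟩
      · have hlt : i < n + 2 := by omega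
        have := h1 ⟨i, hlt⟩ (by simpa) (by simpa using (show i ≤ n by omega))
        simpa using this
      · simpa using h2
  rw [hset, ← Measure.map_apply
      (measurable_pi_lambda (fun ω (i : Fin (n+2)) => r i ω) fun i => hmeas i)
      (measurableSet_S n),
    map_pi P r hmeas hind hunif (n+2), pi_vol n]
  congr 1
  push_cast
  ring

lemma sum_p (m : ℕ) (hm : 1 ≤ m) :
    ∑ k ∈ Finset.Icc 2 m, (1/((k:ℝ)*((k:ℝ)-1))) = 1 - 1/(m:ℝ) := by
  induction m with
  | zero => omega
  | succ m ih =>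
    rcases Nat.lt_or_ge m 1 with h | h
    · interval_cases m
      simp
    · rw [Finset.sum_Icc_succ_top (by omega : 2 ≤ m+1), ih h]
      have hm1 : (1:ℝ) ≤ (m:ℝ) := by exact_mod_cast h
      have hm0 : (m:ℝ) ≠ 0 := by linarith
      push_cast
      field_simp
      ring_nf
      rw [mul_inv_cancel₀ hm0]
      ring

lemma sum_h (m : ℕ) (hm : 1 ≤ m) :
    ∑ k ∈ Finset.Icc 2 m, (k:ℝ) * (1/((k:ℝ)*((k:ℝ)-1))) = (harmonic (m-1) : ℝ) := by
  induction m with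
  | zero => omega
  | succ m ih =>
    rcases Nat.lt_or_ge m 1 with h | h
    · interval_cases m
      simp
    · rw [Finset.sum_Icc_succ_top (by omega : 2 ≤ m+1), ih h]
      have hmm : m - 1 + 1 = m := by omega
      have hh : harmonic ((m+1) - 1) = harmonic (m-1) + 1/((m:ℚ)) := by
        rw [Nat.add_sub_cancel, ← hmm, harmonic_succ]
        push_cast [hmm]
        norm_num
      rw [hh]
      have hm1 : (1:ℝ) ≤ (m:ℝ) := by exact_mod_cast h
      have hm0 : (m:ℝ) ≠ 0 := by linarith
      push_cast
      field_simp
      ring_nf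
      rw [mul_inv_cancel₀ hm0]
      ring

/-- BFS exploration with i.i.d. uniform `[0,1]` ranks.  `r 0` is the rank of
`v` and `r 1, r 2, …` are the ranks of the vertices in exploration order (the
component has size at least `t`).  The BFS explores exactly `k` vertices
(`2 ≤ k < t`) iff the ranks `r 1, …, r (k-2)` all exceed `r 0` and
`r (k-1) < r 0`; this event has probability `1/(k(k-1))`.  Consequently the
expected number of explored vertices (where exploring fewer than `t` vertices
with none of the events occurring means `t` vertices are explored) is
`O(log t)`, concretely at most `3 + log t`. -/
theorem bfs_exploration_bound (t : ℕ) (ht : 2 ≤ t)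
    {Ω : Type*} [MeasurableSpace Ω] (P : Measure Ω) [IsProbabilityMeasure P]
    (r : ℕ → Ω → ℝ)
    (hmeas : ∀ i, Measurable (r i))
    (hind : iIndepFun r P)
    (hunif : ∀ i, Measure.map (r i) P = (volume.restrict (Set.Icc (0:ℝ) 1))) :
    (∀ k : ℕ, 2 ≤ k → k < t →
      P {ω | (∀ i : ℕ, 1 ≤ i → i ≤ k - 2 → r 0 ω < r i ω) ∧ r (k-1) ω < r 0 ω}
        = ENNReal.ofReal (1 / ((k : ℝ) * ((k : ℝ) - 1)))) ∧
    (∑ k ∈ Finset.Icc 2 (t-1), (k : ℝ) *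
        (P {ω | (∀ i : ℕ, 1 ≤ i → i ≤ k - 2 → r 0 ω < r i ω) ∧
                  r (k-1) ω < r 0 ω}).toReal)
      + (t : ℝ) * (1 - ∑ k ∈ Finset.Icc 2 (t-1),
          (P {ω | (∀ i : ℕ, 1 ≤ i → i ≤ k - 2 → r 0 ω < r i ω) ∧
                    r (k-1) ω < r 0 ω}).toReal)
      ≤ 3 + Real.log t := by
  have hunif' : ∀ i, Measure.map (r i) P = unif := fun i => (hunif i).trans rfl
  refine ⟨fun k hk2 _ => prob_eq P r hmeas hind hunif' k hk2, ?_⟩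
  have hto : ∀ k ∈ Finset.Icc 2 (t-1),
      (P {ω | (∀ i : ℕ, 1 ≤ i → i ≤ k - 2 → r 0 ω < r i ω) ∧ r (k-1) ω < r 0 ω}).toReal
      = 1/((k:ℝ)*((k:ℝ)-1)) := by
    intro k hk
    simp only [Finset.mem_Icc] at hk
    rw [prob_eq P r hmeas hind hunif' k hk.1, ENNReal.toReal_ofReal]
    have hk2 : (2:ℝ) ≤ (k:ℝ) := by exact_mod_cast hk.1
    have : (0:ℝ) ≤ (k:ℝ) * ((k:ℝ)-1) := by nlinarith
    exact div_nonneg zero_le_one this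
  rw [Finset.sum_congr rfl (fun k hk => by rw [hto k hk] :
    ∀ k ∈ Finset.Icc 2 (t-1), (k : ℝ) *
      (P {ω | (∀ i : ℕ, 1 ≤ i → i ≤ k - 2 → r 0 ω < r i ω) ∧ r (k-1) ω < r 0 ω}).toReal
      = (k:ℝ) * (1/((k:ℝ)*((k:ℝ)-1)))),
    Finset.sum_congr rfl hto, sum_h (t-1) (by omega), sum_p (t-1) (by omega)]
  have hcast : ((t-1:ℕ):ℝ) = (t:ℝ) - 1 := by
    push_cast [Nat.cast_sub (by omega : 1 ≤ t)]
    ring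
  rw [hcast]
  have ht2 : (2:ℝ) ≤ (t:ℝ) := by exact_mod_cast ht
  have h1 : (harmonic (t-1-1) : ℝ) ≤ 1 + Real.log ((t-2:ℕ):ℝ) := by
    have e : t-1-1 = t-2 := by omega
    rw [e]
    exact harmonic_le_one_add_log (t-2)
  have h2 : Real.log ((t-2:ℕ):ℝ) ≤ Real.log t := by
    by_cases h : t = 2
    · subst h
      simp
      exact Real.log_nonneg (by norm_num)
    · have h3 : 3 ≤ t := by omega
      have hp : (0:ℝ) < ((t-2:ℕ):ℝ) := by
        have : 1 ≤ t - 2 := by omega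
        exact_mod_cast Nat.lt_of_lt_of_le Nat.zero_lt_one this
      exact Real.log_le_log hp (by exact_mod_cast Nat.sub_le t 2)
  have h3 : (t:ℝ) * (1 - (1 - 1/((t:ℝ)-1))) ≤ 2 := by
    have hpos : (0:ℝ) < (t:ℝ) - 1 := by linarith
    have : 1 - (1 - 1/((t:ℝ)-1)) = 1/((t:ℝ)-1) := by ring
    rw [this, mul_one_div, div_le_iff₀ hpos]
    linarith
  linarith
end

section
/- If each vertex of a graph has degree at most k and each edge of the graph is sampled independently with probability p, then for the random subgraph H, the expected number of edges of G crossing between distinct connected components of H is at most n/p, where n is the number of vertices (Karger's sampling theorem); as a corollary, if p = √(n/m) then the expected number of edges in H plus the expected number of inter-component edges is O(√(mn)). -/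
open SimpleGraph Finset


open Finset

section Prob
variable {ι : Type} [Fintype ι] [DecidableEq ι] (p : ℝ)

lemma sum_wt : ∑ ω : ι → Bool, ∏ e, (if ω e then p else 1 - p) = 1 := by
  rw [← Fintype.prod_sum (fun (_ : ι) (b : Bool) => if b then p else 1 - p)]
  simp

lemma cond_exp (i : ι) (g : Bool → ℝ) (f : (ι → Bool) → ℝ)
    (hf : ∀ (ω : ι → Bool) (b : Bool), f (Function.update ω i b) = f ω) :
    ∑ ω : ι → Bool, (∏ e, if ω e then p else 1 - p) * (g (ω i) * f ω)
      = (p * g true + (1 - p) * g false) *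
        ∑ ω : ι → Bool, (∏ e, if ω e then p else 1 - p) * f ω := by
  set e := Equiv.piSplitAt i (fun _ : ι => Bool) with he
  have happ : ∀ (b : Bool) (σ : {j // j ≠ i} → Bool), e.symm (b, σ) i = b := by
    intro b σ; simp [he, Equiv.piSplitAt_symm_apply]
  have hne : ∀ (b : Bool) (σ : {j // j ≠ i} → Bool) (j : ι) (hj : j ≠ i),
      e.symm (b, σ) j = σ ⟨j, hj⟩ := by
    intro b σ j hj; simp [he, Equiv.piSplitAt_symm_apply, hj]
  have hsub : ∀ (b : Bool) σ, e.symm (b, σ) = Function.update (e.symm (true, σ)) i b := by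
    intro b σ
    funext j
    rcases eq_or_ne j i with rfl | hj
    · rw [happ, Function.update_self]
    · rw [Function.update_of_ne hj, hne _ _ _ hj, hne _ _ _ hj]
  have hwt : ∀ (b : Bool) (σ : {j // j ≠ i} → Bool),
      (∏ j : ι, if e.symm (b, σ) j then p else 1 - p)
        = (if b then p else 1 - p) * ∏ j : {j // j ≠ i}, (if σ j then p else 1 - p) := by
    intro b σ
    rw [Fintype.prod_eq_mul_prod_compl i, happ]
    congr 1
    rw [Finset.prod_subtype (p := fun j => j ≠ i) ({i}ᶜ : Finset ι) (by simp)
      (fun j => if e.symm (b, σ) j then p else 1 - p)]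
    exact Fintype.prod_congr _ _ fun j => by rw [hne b σ (j : ι) j.2]
  have hfconst : ∀ (b : Bool) σ, f (e.symm (b, σ)) = f (e.symm (true, σ)) := by
    intro b σ; rw [hsub b σ, hf]
  have key : ∀ g : Bool → ℝ,
      ∑ ω : ι → Bool, (∏ j, if ω j then p else 1 - p) * (g (ω i) * f ω)
        = (p * g true + (1 - p) * g false) *
          ∑ σ : {j // j ≠ i} → Bool,
            (∏ j : {j // j ≠ i}, if σ j then p else 1 - p) * f (e.symm (true, σ)) := by
    intro g
    rw [← Equiv.sum_comp e.symm (fun ω => (∏ j, if ω j then p else 1 - p) * (g (ω i) * f ω)),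
      Fintype.sum_prod_type, Fintype.sum_bool, ← Finset.sum_add_distrib, Finset.mul_sum]
    refine Finset.sum_congr rfl fun σ _ => ?_
    simp only [hwt, happ, hfconst, if_true]
    norm_num
    ring
  rw [key g]
  have k1 := key (fun _ => 1)
  simp only [mul_one, one_mul] at k1
  rw [k1]; ring

end Prob

open SimpleGraph Finset

section Graph
variable {V : Type} [Fintype V] [DecidableEq V]
variable (G : SimpleGraph V) [DecidableRel G.Adj]

/-- index of an edge -/
noncomputable def kidx (e : G.edgeSet) : ℕ := Fintype.equivFin G.edgeSet e

lemma kidx_inj : Function.Injective (kidx G) := by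
  intro a b h
  exact (Fintype.equivFin G.edgeSet).injective (Fin.ext h)

/-- the graph of sampled edges among the first `k` edges -/
def KGr (ω : G.edgeSet → Bool) (k : ℕ) : SimpleGraph V :=
  SimpleGraph.fromEdgeSet {s | ∃ h : s ∈ G.edgeSet, kidx G ⟨s, h⟩ < k ∧ ω ⟨s, h⟩ = true}

/-- full sampled graph -/
def KFull (ω : G.edgeSet → Bool) : SimpleGraph V :=
  SimpleGraph.fromEdgeSet {s : Sym2 V | ∃ h : s ∈ G.edgeSet, ω ⟨s, h⟩ = true}

def KUseful (ω : G.edgeSet → Bool) (e : G.edgeSet) : Prop :=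
  ∃ u v : V, (e : Sym2 V) = s(u, v) ∧ ¬ (KGr G ω (kidx G e)).Reachable u v

lemma KGr_mono (ω : G.edgeSet → Bool) {j k : ℕ} (h : j ≤ k) : KGr G ω j ≤ KGr G ω k :=
  SimpleGraph.fromEdgeSet_mono (fun s hs => by obtain ⟨h1, h2, h3⟩ := hs; exact ⟨h1, lt_of_lt_of_le h2 h, h3⟩)

lemma KGr_le_KFull (ω : G.edgeSet → Bool) (k : ℕ) : KGr G ω k ≤ KFull G ω :=
  SimpleGraph.fromEdgeSet_mono (fun s hs => by obtain ⟨h1, h2, h3⟩ := hs; exact ⟨h1, h3⟩)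

lemma card_cc_le {G₁ G₂ : SimpleGraph V} (h : G₁ ≤ G₂) :
    Nat.card G₂.ConnectedComponent ≤ Nat.card G₁.ConnectedComponent := by
  apply Nat.card_le_card_of_surjective (ConnectedComponent.map (Hom.ofLE h))
  intro c
  induction c using ConnectedComponent.ind with
  | _ v => exact ⟨G₁.connectedComponentMk v, ConnectedComponent.map_mk _ _⟩

lemma card_cc_le_card : ∀ (G₁ : SimpleGraph V), Nat.card G₁.ConnectedComponent ≤ Fintype.card V := by
  intro G₁
  rw [← Nat.card_eq_fintype_card]
  apply Nat.card_le_card_of_surjective G₁.connectedComponentMk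
  intro c
  induction c using ConnectedComponent.ind with
  | _ v => exact ⟨v, rfl⟩

lemma card_cc_lt {G₁ G₂ : SimpleGraph V} (h : G₁ ≤ G₂) {u v : V}
    (hr : ¬ G₁.Reachable u v) (ha : G₂.Adj u v) :
    Nat.card G₂.ConnectedComponent < Nat.card G₁.ConnectedComponent := by
  classical
  letI : Fintype G₁.ConnectedComponent := Fintype.ofFinite _
  letI : Fintype G₂.ConnectedComponent := Fintype.ofFinite _
  rw [Nat.card_eq_fintype_card, Nat.card_eq_fintype_card]
  apply Fintype.card_lt_of_surjective_not_injective
    (ConnectedComponent.map (Hom.ofLE h))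
  · intro c
    induction c using ConnectedComponent.ind with
    | _ w => exact ⟨G₁.connectedComponentMk w, ConnectedComponent.map_mk _ _⟩
  · intro hinj
    apply hr
    have : G₁.connectedComponentMk u = G₁.connectedComponentMk v := by
      apply hinj
      rw [ConnectedComponent.map_mk, ConnectedComponent.map_mk]
      exact ConnectedComponent.eq.mpr ha.reachable
    exact ConnectedComponent.eq.mp this

end Graph

section Graph2
set_option linter.unusedSectionVars false
variable {V : Type} [Fintype V] [DecidableEq V]
variable (G : SimpleGraph V) [DecidableRel G.Adj]

lemma kidx_lt (e : G.edgeSet) : kidx G e < Fintype.card G.edgeSet :=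
  (Fintype.equivFin G.edgeSet e).isLt

lemma step_lt (ω : G.edgeSet → Bool) {k : ℕ} {e : G.edgeSet}
    (hk : kidx G e = k) (hω : ω e = true) (hu : KUseful G ω e) :
    Nat.card (KGr G ω (k + 1)).ConnectedComponent
      < Nat.card (KGr G ω k).ConnectedComponent := by
  obtain ⟨u, v, he, hr⟩ := hu
  have huv : G.Adj u v := G.mem_edgeSet.mp (he ▸ e.2)
  refine card_cc_lt (KGr_mono G ω (Nat.le_succ k)) (hk ▸ hr) ?_
  rw [KGr, SimpleGraph.fromEdgeSet_adj]
  refine ⟨⟨he ▸ e.2, ?_, ?_⟩, huv.ne⟩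
  · rw [show (⟨s(u,v), he ▸ e.2⟩ : G.edgeSet) = e from Subtype.ext he.symm, hk]
    exact Nat.lt_succ_self k
  · rw [show (⟨s(u,v), he ▸ e.2⟩ : G.edgeSet) = e from Subtype.ext he.symm]
    exact hω

open Classical in
lemma count_useful (ω : G.edgeSet → Bool) (k : ℕ) :
    (univ.filter (fun e : G.edgeSet => kidx G e < k ∧ KUseful G ω e ∧ ω e = true)).card
      + Nat.card (KGr G ω k).ConnectedComponent ≤ Fintype.card V := by
  induction k with
  | zero => simpa using card_cc_le_card (KGr G ω 0)
  | succ k ih =>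
    by_cases hex : ∃ e : G.edgeSet, kidx G e = k ∧ ω e = true ∧ KUseful G ω e
    · obtain ⟨e0, hk, hω, hu⟩ := hex
      have hfilter : (univ.filter fun e : G.edgeSet =>
            kidx G e < k + 1 ∧ KUseful G ω e ∧ ω e = true)
          = insert e0 (univ.filter fun e : G.edgeSet =>
            kidx G e < k ∧ KUseful G ω e ∧ ω e = true) := by
        ext e
        simp only [mem_filter, mem_insert, mem_univ, true_and]
        constructor
        · rintro ⟨hlt, hu', hω'⟩
          rcases Nat.lt_succ_iff_lt_or_eq.mp hlt with h | h
          · exact Or.inr ⟨h, hu', hω'⟩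
          · exact Or.inl (kidx_inj G (h.trans hk.symm))
        · rintro (rfl | ⟨hlt, hu', hω'⟩)
          · exact ⟨by omega, hu, hω⟩
          · exact ⟨by omega, hu', hω'⟩
      have hnotmem : e0 ∉ (univ.filter fun e : G.edgeSet =>
          kidx G e < k ∧ KUseful G ω e ∧ ω e = true) := by
        simp [hk]
      rw [hfilter, Finset.card_insert_of_notMem hnotmem]
      have hlt := step_lt G ω hk hω hu
      omega
    · have hfilter : (univ.filter fun e : G.edgeSet =>
            kidx G e < k + 1 ∧ KUseful G ω e ∧ ω e = true)
          = (univ.filter fun e : G.edgeSet =>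
            kidx G e < k ∧ KUseful G ω e ∧ ω e = true) := by
        ext e
        simp only [mem_filter, mem_univ, true_and]
        constructor
        · rintro ⟨hlt, hu', hω'⟩
          rcases Nat.lt_succ_iff_lt_or_eq.mp hlt with h | h
          · exact ⟨h, hu', hω'⟩
          · exact absurd ⟨e, h, hω', hu'⟩ hex
        · rintro ⟨hlt, hu', hω'⟩
          exact ⟨by omega, hu', hω'⟩
      rw [hfilter]
      have := card_cc_le (KGr_mono G ω (Nat.le_succ k))
      simp only [Nat.succ_eq_add_one] at this
      omega

open Classical in
lemma count_useful_all (ω : G.edgeSet → Bool) :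
    (univ.filter (fun e : G.edgeSet => KUseful G ω e ∧ ω e = true)).card
      ≤ Fintype.card V := by
  have h := count_useful G ω (Fintype.card G.edgeSet)
  have : (univ.filter (fun e : G.edgeSet =>
        kidx G e < Fintype.card G.edgeSet ∧ KUseful G ω e ∧ ω e = true))
      = (univ.filter (fun e : G.edgeSet => KUseful G ω e ∧ ω e = true)) := by
    apply Finset.filter_congr
    intro e _
    rw [and_iff_right (kidx_lt G e)]
  rw [this] at h
  omega

lemma crossing_useful (ω : G.edgeSet → Bool) (e : G.edgeSet)
    (h : ∃ u v : V, (e : Sym2 V) = s(u, v) ∧ ¬ (KFull G ω).Reachable u v) :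
    KUseful G ω e ∧ ω e = false := by
  obtain ⟨u, v, he, hr⟩ := h
  constructor
  · exact ⟨u, v, he, fun hreach => hr (hreach.mono (KGr_le_KFull G ω _))⟩
  · by_contra hωe
    have hωe : ω e = true := by simpa using hωe
    apply hr
    apply SimpleGraph.Adj.reachable
    rw [KFull, SimpleGraph.fromEdgeSet_adj]
    refine ⟨⟨he ▸ e.2, ?_⟩, (G.mem_edgeSet.mp (he ▸ e.2)).ne⟩
    rw [show (⟨s(u,v), he ▸ e.2⟩ : G.edgeSet) = e from Subtype.ext he.symm]
    exact hωe

lemma kuseful_update (ω : G.edgeSet → Bool) (e : G.edgeSet) (b : Bool) :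
    KUseful G (Function.update ω e b) e ↔ KUseful G ω e := by
  have hgr : KGr G (Function.update ω e b) (kidx G e) = KGr G ω (kidx G e) := by
    rw [KGr, KGr]
    congr 1
    ext s
    constructor
    · rintro ⟨h, hlt, hω⟩
      refine ⟨h, hlt, ?_⟩
      rwa [Function.update_of_ne (fun hc => by rw [hc] at hlt; omega)] at hω
    · rintro ⟨h, hlt, hω⟩
      refine ⟨h, hlt, ?_⟩
      rwa [Function.update_of_ne (fun hc => by rw [hc] at hlt; omega)]
  rw [KUseful, KUseful, hgr]

end Graph2


/-- Karger's sampling theorem. Let `G` be a simple graph on `n` vertices with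
`m ≥ n` edges in which each vertex has degree at most `kdeg`, and let `H` be
the random subgraph obtained by keeping each edge independently with
probability `p`.  The expected number of edges of `G` whose endpoints lie in
distinct connected components of `H` is at most `n/p`.  As a corollary, if
`p = √(n/m)` then the expected number of edges of `H` plus the expected
number of inter-component edges is at most `2√(mn) = O(√(mn))`.  Expectations
are written as explicit sums over all outcomes `ω : G.edgeSet → Bool`, where
an outcome has probability `∏_e (p if e sampled else 1-p)`. -/
theorem karger_sampling {V : Type} [Fintype V] [DecidableEq V]
    (G : SimpleGraph V) [DecidableRel G.Adj] (kdeg n m : ℕ)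
    (hn : Fintype.card V = n) (hm : G.edgeFinset.card = m)
    (hdeg : ∀ v : V, G.degree v ≤ kdeg) (hmn : n ≤ m)
    (p : ℝ) (hp0 : 0 < p) (hp1 : p < 1) :
    (∑ ω : G.edgeSet → Bool,
        (∏ e : G.edgeSet, (if ω e then p else 1 - p)) *
          (Nat.card {e : G.edgeSet // ∃ u v : V, (e : Sym2 V) = s(u, v) ∧
              ¬ (SimpleGraph.fromEdgeSet
                  {s : Sym2 V | ∃ h : s ∈ G.edgeSet, ω ⟨s, h⟩ = true}).Reachable u v} : ℝ))
      ≤ (n : ℝ) / p ∧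
    (p = Real.sqrt ((n : ℝ) / (m : ℝ)) →
      (∑ ω : G.edgeSet → Bool,
          (∏ e : G.edgeSet, (if ω e then p else 1 - p)) *
            ((Nat.card {e : G.edgeSet // ω e = true} : ℝ) +
              (Nat.card {e : G.edgeSet // ∃ u v : V, (e : Sym2 V) = s(u, v) ∧
                ¬ (SimpleGraph.fromEdgeSet
                    {s : Sym2 V | ∃ h : s ∈ G.edgeSet, ω ⟨s, h⟩ = true}).Reachable u v} : ℝ)))
        ≤ 2 * Real.sqrt ((m : ℝ) * (n : ℝ))) := by
  classical
  have hE : Fintype.card G.edgeSet = m := by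
    rw [← hm]; exact (Set.toFinset_card _).symm
  have hW0 : ∀ ω : G.edgeSet → Bool,
      0 ≤ ∏ e' : G.edgeSet, (if ω e' then p else 1 - p) := fun ω =>
    Finset.prod_nonneg fun e _ => by
      split_ifs
      · exact hp0.le
      · linarith
  have hsum1 : ∑ ω : G.edgeSet → Bool, ∏ e' : G.edgeSet, (if ω e' then p else 1 - p) = 1 :=
    sum_wt p
  have hcardR : ∀ (P : G.edgeSet → Prop) [DecidablePred P],
      (Nat.card {e : G.edgeSet // P e} : ℝ) = ∑ e : G.edgeSet, if P e then (1:ℝ) else 0 := by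
    intro P hP
    rw [Nat.card_eq_fintype_card, Fintype.card_subtype, Finset.card_filter]
    push_cast
    exact Finset.sum_congr rfl fun e _ => by split_ifs <;> simp
  have hswap : ∀ F : G.edgeSet → (G.edgeSet → Bool) → ℝ,
      ∑ ω : G.edgeSet → Bool,
          (∏ e' : G.edgeSet, (if ω e' then p else 1 - p)) * ∑ e : G.edgeSet, F e ω
        = ∑ e : G.edgeSet, ∑ ω : G.edgeSet → Bool,
            (∏ e' : G.edgeSet, (if ω e' then p else 1 - p)) * F e ω := by
    intro F
    calc ∑ ω : G.edgeSet → Bool,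
          (∏ e' : G.edgeSet, (if ω e' then p else 1 - p)) * ∑ e : G.edgeSet, F e ω
        = ∑ ω : G.edgeSet → Bool, ∑ e : G.edgeSet,
            (∏ e' : G.edgeSet, (if ω e' then p else 1 - p)) * F e ω :=
          Finset.sum_congr rfl fun ω _ => Finset.mul_sum _ _ _
      _ = _ := Finset.sum_comm
  have hPe0 : ∀ e : G.edgeSet, 0 ≤ ∑ ω : G.edgeSet → Bool,
      (∏ e' : G.edgeSet, (if ω e' then p else 1 - p)) * (if KUseful G ω e then (1:ℝ) else 0) :=
    fun e => Finset.sum_nonneg fun ω _ => mul_nonneg (hW0 ω) (by split_ifs <;> norm_num)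
  have hF : ∀ e : G.edgeSet,
      ∑ ω : G.edgeSet → Bool, (∏ e' : G.edgeSet, (if ω e' then p else 1 - p)) *
          (if KUseful G ω e ∧ ω e = false then (1:ℝ) else 0)
        = (1 - p) * ∑ ω : G.edgeSet → Bool,
            (∏ e' : G.edgeSet, (if ω e' then p else 1 - p)) *
              (if KUseful G ω e then (1:ℝ) else 0) := by
    intro e
    have hc := cond_exp p e (fun b => if b then (0:ℝ) else 1)
      (fun ω => if KUseful G ω e then (1:ℝ) else 0)
      (fun ω b => by simp only [kuseful_update G ω e b])
    have hpt : ∀ ω : G.edgeSet → Bool,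
        (if KUseful G ω e ∧ ω e = false then (1:ℝ) else 0)
          = (if ω e then (0:ℝ) else 1) * (if KUseful G ω e then (1:ℝ) else 0) := by
      intro ω
      cases hb : ω e <;> by_cases hA : KUseful G ω e <;> simp [hb, hA]
    simp only [hpt]
    rw [hc]
    norm_num
  have hT : ∀ e : G.edgeSet,
      ∑ ω : G.edgeSet → Bool, (∏ e' : G.edgeSet, (if ω e' then p else 1 - p)) *
          (if KUseful G ω e ∧ ω e = true then (1:ℝ) else 0)
        = p * ∑ ω : G.edgeSet → Bool,
            (∏ e' : G.edgeSet, (if ω e' then p else 1 - p)) *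
              (if KUseful G ω e then (1:ℝ) else 0) := by
    intro e
    have hc := cond_exp p e (fun b => if b then (1:ℝ) else 0)
      (fun ω => if KUseful G ω e then (1:ℝ) else 0)
      (fun ω b => by simp only [kuseful_update G ω e b])
    have hpt : ∀ ω : G.edgeSet → Bool,
        (if KUseful G ω e ∧ ω e = true then (1:ℝ) else 0)
          = (if ω e then (1:ℝ) else 0) * (if KUseful G ω e then (1:ℝ) else 0) := by
      intro ω
      cases hb : ω e <;> by_cases hA : KUseful G ω e <;> simp [hb, hA]
    simp only [hpt]
    rw [hc]
    norm_num
  have hSamp : ∀ e : G.edgeSet,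
      ∑ ω : G.edgeSet → Bool, (∏ e' : G.edgeSet, (if ω e' then p else 1 - p)) *
          (if ω e = true then (1:ℝ) else 0) = p := by
    intro e
    have hc := cond_exp p e (fun b => if b then (1:ℝ) else 0)
      (fun _ => (1:ℝ)) (fun ω b => rfl)
    have hpt : ∀ ω : G.edgeSet → Bool,
        (if ω e = true then (1:ℝ) else 0)
          = (if ω e then (1:ℝ) else 0) * (1 : ℝ) := fun ω => (mul_one _).symm
    simp only [mul_one] at hc
    rw [hc, hsum1]
    norm_num
  have hA0 : (0:ℝ) ≤ ∑ e : G.edgeSet, ∑ ω : G.edgeSet → Bool,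
      (∏ e' : G.edgeSet, (if ω e' then p else 1 - p)) * (if KUseful G ω e then (1:ℝ) else 0) :=
    Finset.sum_nonneg fun e _ => hPe0 e
  have hpA : p * (∑ e : G.edgeSet, ∑ ω : G.edgeSet → Bool,
      (∏ e' : G.edgeSet, (if ω e' then p else 1 - p)) * (if KUseful G ω e then (1:ℝ) else 0))
      ≤ n := by
    rw [Finset.mul_sum]
    calc ∑ e : G.edgeSet, p * ∑ ω : G.edgeSet → Bool,
            (∏ e' : G.edgeSet, (if ω e' then p else 1 - p)) *
              (if KUseful G ω e then (1:ℝ) else 0)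
        = ∑ e : G.edgeSet, ∑ ω : G.edgeSet → Bool,
            (∏ e' : G.edgeSet, (if ω e' then p else 1 - p)) *
              (if KUseful G ω e ∧ ω e = true then (1:ℝ) else 0) :=
          Finset.sum_congr rfl fun e _ => (hT e).symm
      _ = ∑ ω : G.edgeSet → Bool,
            (∏ e' : G.edgeSet, (if ω e' then p else 1 - p)) * ∑ e : G.edgeSet,
              (if KUseful G ω e ∧ ω e = true then (1:ℝ) else 0) :=
          (hswap (fun e ω => if KUseful G ω e ∧ ω e = true then (1:ℝ) else 0)).symm
      _ ≤ ∑ ω : G.edgeSet → Bool,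
            (∏ e' : G.edgeSet, (if ω e' then p else 1 - p)) * n := by
          refine Finset.sum_le_sum fun ω _ => mul_le_mul_of_nonneg_left ?_ (hW0 ω)
          rw [Finset.sum_boole]
          have h2 := count_useful_all G ω
          rw [hn] at h2
          exact_mod_cast h2
      _ = n := by rw [← Finset.sum_mul, hsum1, one_mul]
  have hAn : (∑ e : G.edgeSet, ∑ ω : G.edgeSet → Bool,
      (∏ e' : G.edgeSet, (if ω e' then p else 1 - p)) * (if KUseful G ω e then (1:ℝ) else 0))
      ≤ (n : ℝ) / p := by
    rw [le_div_iff₀ hp0]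
    nlinarith
  have main1 : ∑ ω : G.edgeSet → Bool,
      (∏ e : G.edgeSet, (if ω e then p else 1 - p)) *
        (Nat.card {e : G.edgeSet // ∃ u v : V, (e : Sym2 V) = s(u, v) ∧
          ¬ (KFull G ω).Reachable u v} : ℝ) ≤ (n : ℝ) / p := by
    calc ∑ ω : G.edgeSet → Bool,
          (∏ e : G.edgeSet, (if ω e then p else 1 - p)) *
            (Nat.card {e : G.edgeSet // ∃ u v : V, (e : Sym2 V) = s(u, v) ∧
              ¬ (KFull G ω).Reachable u v} : ℝ)
        ≤ ∑ ω : G.edgeSet → Bool,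
            (∏ e' : G.edgeSet, (if ω e' then p else 1 - p)) * ∑ e : G.edgeSet,
              (if KUseful G ω e ∧ ω e = false then (1:ℝ) else 0) := by
          refine Finset.sum_le_sum fun ω _ => ?_
          rw [hcardR (fun e : G.edgeSet => ∃ u v : V, (e : Sym2 V) = s(u, v) ∧
            ¬ (KFull G ω).Reachable u v)]
          refine mul_le_mul_of_nonneg_left (Finset.sum_le_sum fun e _ => ?_) (hW0 ω)
          by_cases h : ∃ u v : V, (e : Sym2 V) = s(u, v) ∧ ¬ (KFull G ω).Reachable u v
          · rw [if_pos h, if_pos (crossing_useful G ω e h)]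
          · rw [if_neg h]
            split_ifs <;> norm_num
      _ = ∑ e : G.edgeSet, ∑ ω : G.edgeSet → Bool,
            (∏ e' : G.edgeSet, (if ω e' then p else 1 - p)) *
              (if KUseful G ω e ∧ ω e = false then (1:ℝ) else 0) :=
          hswap (fun e ω => if KUseful G ω e ∧ ω e = false then (1:ℝ) else 0)
      _ = (1 - p) * ∑ e : G.edgeSet, ∑ ω : G.edgeSet → Bool,
            (∏ e' : G.edgeSet, (if ω e' then p else 1 - p)) *
              (if KUseful G ω e then (1:ℝ) else 0) := by
          rw [Finset.mul_sum]
          exact Finset.sum_congr rfl fun e _ => hF e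
      _ ≤ ∑ e : G.edgeSet, ∑ ω : G.edgeSet → Bool,
            (∏ e' : G.edgeSet, (if ω e' then p else 1 - p)) *
              (if KUseful G ω e then (1:ℝ) else 0) := by nlinarith
      _ ≤ (n : ℝ) / p := hAn
  constructor
  · exact main1
  · intro hp
    have hm0 : (0:ℝ) < m := by
      by_contra h
      push_neg at h
      have h0 : (m:ℝ) = 0 := le_antisymm h (Nat.cast_nonneg m)
      rw [hp, h0, div_zero, Real.sqrt_zero] at hp0
      exact lt_irrefl 0 hp0
    have hn0 : (0:ℝ) < n := by
      by_contra h
      push_neg at h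
      have h0 : (n:ℝ) = 0 := le_antisymm h (Nat.cast_nonneg n)
      rw [hp, h0, zero_div, Real.sqrt_zero] at hp0
      exact lt_irrefl 0 hp0
    have hsamp : ∑ ω : G.edgeSet → Bool,
        (∏ e' : G.edgeSet, (if ω e' then p else 1 - p)) *
          (Nat.card {e : G.edgeSet // ω e = true} : ℝ) = m * p := by
      calc ∑ ω : G.edgeSet → Bool,
            (∏ e' : G.edgeSet, (if ω e' then p else 1 - p)) *
              (Nat.card {e : G.edgeSet // ω e = true} : ℝ)
          = ∑ ω : G.edgeSet → Bool,
              (∏ e' : G.edgeSet, (if ω e' then p else 1 - p)) * ∑ e : G.edgeSet,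
                (if ω e = true then (1:ℝ) else 0) := by
            refine Finset.sum_congr rfl fun ω _ => ?_
            rw [hcardR (fun e : G.edgeSet => ω e = true)]
        _ = ∑ e : G.edgeSet, ∑ ω : G.edgeSet → Bool,
              (∏ e' : G.edgeSet, (if ω e' then p else 1 - p)) *
                (if ω e = true then (1:ℝ) else 0) :=
            hswap (fun e ω => if ω e = true then (1:ℝ) else 0)
        _ = ∑ e : G.edgeSet, p := Finset.sum_congr rfl fun e _ => hSamp e
        _ = m * p := by rw [Finset.sum_const, Finset.card_univ, hE, nsmul_eq_mul]
    have harith : (m:ℝ) * p + (n:ℝ) / p ≤ 2 * Real.sqrt ((m:ℝ) * (n:ℝ)) := by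
      have hsm : Real.sqrt m * Real.sqrt m = m := Real.mul_self_sqrt hm0.le
      have hsn : Real.sqrt n * Real.sqrt n = n := Real.mul_self_sqrt hn0.le
      have hsm0 : 0 < Real.sqrt m := Real.sqrt_pos.mpr hm0
      have hsn0 : 0 < Real.sqrt n := Real.sqrt_pos.mpr hn0
      have hpval : p = Real.sqrt n / Real.sqrt m := by
        rw [hp, Real.sqrt_div hn0.le]
      have h2 : (m:ℝ) * p + (n:ℝ) / p = 2 * (Real.sqrt m * Real.sqrt n) := by
        rw [hpval]
        rw [show (m:ℝ) = Real.sqrt m * Real.sqrt m from hsm.symm,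
          show (n:ℝ) = Real.sqrt n * Real.sqrt n from hsn.symm]
        field_simp
        simp only [Real.sqrt_mul_self hsn0.le, Real.sqrt_mul_self hsm0.le, Real.sqrt_sq hsn0.le, Real.sqrt_sq hsm0.le]
        ring
      rw [h2, Real.sqrt_mul hm0.le]
    calc ∑ ω : G.edgeSet → Bool,
          (∏ e : G.edgeSet, (if ω e then p else 1 - p)) *
            ((Nat.card {e : G.edgeSet // ω e = true} : ℝ) +
              (Nat.card {e : G.edgeSet // ∃ u v : V, (e : Sym2 V) = s(u, v) ∧
                ¬ (KFull G ω).Reachable u v} : ℝ))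
        = (∑ ω : G.edgeSet → Bool,
            (∏ e' : G.edgeSet, (if ω e' then p else 1 - p)) *
              (Nat.card {e : G.edgeSet // ω e = true} : ℝ))
          + ∑ ω : G.edgeSet → Bool,
              (∏ e : G.edgeSet, (if ω e then p else 1 - p)) *
                (Nat.card {e : G.edgeSet // ∃ u v : V, (e : Sym2 V) = s(u, v) ∧
                  ¬ (KFull G ω).Reachable u v} : ℝ) := by
          rw [← Finset.sum_add_distrib]
          exact Finset.sum_congr rfl fun ω _ => by ring
      _ ≤ (m:ℝ) * p + (n:ℝ) / p := add_le_add (le_of_eq hsamp) main1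
      _ ≤ 2 * Real.sqrt ((m:ℝ) * (n:ℝ)) := harith
end
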